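/- For every positive integer t ≥ 2 and integer n with n > t, s(Z_n, t) ≥ ⌊log_t(n-1)⌋. -/

import Mathlib

/-- `S` is a `t`-free set in the additive abelian group `G`: whenever a sum of `k`
elements of `S` equals a sum of `l` elements of `S` with `k + l ≤ t`, the two
multisets of terms coincide (in particular `k = l`). -/
def IsTFreeSet {G : Type*} [AddCommGroup G] (t : ℕ) (S : Set G) : Prop :=
  ∀ A B : Multiset G, (∀ x ∈ A, x ∈ S) → (∀ x ∈ B, x ∈ S) →
    Multiset.card A + Multiset.card B ≤ t → A.sum = B.sum → A = B

/-- `sFree n t` is the maximum cardinality of a `t`-free set in `ZMod n`. -/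
noncomputable def sFree (n t : ℕ) : ℕ :=
  sSup {m | ∃ S : Finset (ZMod n), IsTFreeSet t (↑S : Set (ZMod n)) ∧ S.card = m}

/-- Uniqueness of small-digit base-`t` representations. -/
lemma pow_rep_unique (t : ℕ) (ht : 2 ≤ t) :
    ∀ (k : ℕ) (f g : ℕ → ℕ),
      (∑ i ∈ Finset.range k, f i) + (∑ i ∈ Finset.range k, g i) ≤ t →
      (∑ i ∈ Finset.range k, f i * t ^ i) = (∑ i ∈ Finset.range k, g i * t ^ i) →
      ∀ i < k, f i = g i := by
  intro k
  induction k with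
  | zero => intro f g _ _ i hi; omega
  | succ k ih =>
    intro f g hcard hsum i hi
    rw [Finset.sum_range_succ' f, Finset.sum_range_succ' g] at hcard
    rw [Finset.sum_range_succ' (fun i => f i * t ^ i),
        Finset.sum_range_succ' (fun i => g i * t ^ i)] at hsum
    simp only [pow_zero, mul_one, pow_succ'] at hsum
    have hF : ∀ (h : ℕ → ℕ), ∑ j ∈ Finset.range k, h (j+1) * (t * t ^ j)
        = t * ∑ j ∈ Finset.range k, h (j+1) * t ^ j := by
      intro h
      rw [Finset.mul_sum]
      apply Finset.sum_congr rfl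
      intro j _; ring
    rw [hF f, hF g] at hsum
    set F := ∑ j ∈ Finset.range k, f (j+1) * t ^ j with hFdef
    set G := ∑ j ∈ Finset.range k, g (j+1) * t ^ j with hGdef
    -- f 0 % t = g 0 % t
    have hmod : f 0 % t = g 0 % t := by
      have h1 : (t * F + f 0) % t = f 0 % t := by
        rw [Nat.add_comm, Nat.add_mul_mod_self_left]
      have h2 : (t * G + g 0) % t = g 0 % t := by
        rw [Nat.add_comm, Nat.add_mul_mod_self_left]
      rw [← h1, ← h2, hsum]
    have hf0 : f 0 + g 0 ≤ t := by
      have := Finset.sum_nonneg (fun j (_ : j ∈ Finset.range k) => Nat.zero_le (f (j+1)))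
      omega
    -- corner case: one of them equals t
    have hne : f 0 ≠ t ∧ g 0 ≠ t ∨ (f 0 = t ∧ g 0 = 0) ∨ (g 0 = t ∧ f 0 = 0) := by
      omega
    have h00 : f 0 = g 0 := by
      rcases hne with ⟨h1, h2⟩ | ⟨h1, h2⟩ | ⟨h1, h2⟩
      · have hflt : f 0 < t := by omega
        have hglt : g 0 < t := by omega
        rw [Nat.mod_eq_of_lt hflt, Nat.mod_eq_of_lt hglt] at hmod
        exact hmod
      · -- f 0 = t, g 0 = 0 : then all other digits vanish
        exfalso
        have hfz : ∑ j ∈ Finset.range k, f (j+1) = 0 := by omega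
        have hgz : ∑ j ∈ Finset.range k, g (j+1) = 0 := by omega
        have hFz : F = 0 := by
          rw [hFdef]
          apply Finset.sum_eq_zero
          intro j hj
          have := (Finset.sum_eq_zero_iff.mp hfz) j hj
          simp [this]
        have hGz : G = 0 := by
          rw [hGdef]
          apply Finset.sum_eq_zero
          intro j hj
          have := (Finset.sum_eq_zero_iff.mp hgz) j hj
          simp [this]
        rw [hFz, hGz, h1, h2] at hsum
        omega
      · exfalso
        have hfz : ∑ j ∈ Finset.range k, f (j+1) = 0 := by omega
        have hgz : ∑ j ∈ Finset.range k, g (j+1) = 0 := by omega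
        have hFz : F = 0 := by
          rw [hFdef]
          apply Finset.sum_eq_zero
          intro j hj
          have := (Finset.sum_eq_zero_iff.mp hfz) j hj
          simp [this]
        have hGz : G = 0 := by
          rw [hGdef]
          apply Finset.sum_eq_zero
          intro j hj
          have := (Finset.sum_eq_zero_iff.mp hgz) j hj
          simp [this]
        rw [hFz, hGz, h1, h2] at hsum
        omega
    have hFG : F = G := by
      have : t * F = t * G := by omega
      exact Nat.eq_of_mul_eq_mul_left (by omega) this
    rcases Nat.eq_zero_or_pos i with rfl | hpos
    · exact h00
    · obtain ⟨j, rfl⟩ : ∃ j, i = j + 1 := ⟨i - 1, by omega⟩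
      have hcard' : (∑ i ∈ Finset.range k, f (i+1)) + (∑ i ∈ Finset.range k, g (i+1)) ≤ t := by
        omega
      exact ih (fun j => f (j+1)) (fun j => g (j+1)) hcard' hFG j (by omega)

lemma multiset_decomp {G : Type*} [DecidableEq G] (k : ℕ) (φ : ℕ → G)
    (hφ : ∀ i ∈ Finset.range k, ∀ j ∈ Finset.range k, φ i = φ j → i = j)
    (A : Multiset G) (hA : ∀ x ∈ A, ∃ i ∈ Finset.range k, x = φ i) :
    A = ∑ i ∈ Finset.range k, Multiset.replicate (A.count (φ i)) (φ i) := by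
  ext a
  rw [Multiset.count_sum']
  simp only [Multiset.count_replicate]
  by_cases h : ∃ i ∈ Finset.range k, a = φ i
  · obtain ⟨i, hi, rfl⟩ := h
    rw [Finset.sum_eq_single i]
    · rw [if_pos rfl]
    · intro j hj hji
      rw [if_neg]
      intro e
      exact hji (hφ j hj i hi e)
    · intro h; exact absurd hi h
  · rw [Multiset.count_eq_zero_of_notMem (fun ha => h (hA a ha))]
    symm
    apply Finset.sum_eq_zero
    intro j hj
    rw [if_neg (fun e => h ⟨j, hj, e.symm⟩)]

lemma card_finset_sum {α : Type*} {β : Type*} [DecidableEq β] (s : Finset β) (m : β → Multiset α) :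
    Multiset.card (∑ i ∈ s, m i) = ∑ i ∈ s, Multiset.card (m i) := by
  induction s using Finset.induction with
  | empty => simp
  | @insert _ _ h ih => rw [Finset.sum_insert h, Finset.sum_insert h, Multiset.card_add, ih]

lemma sum_finset_sum {α : Type*} {β : Type*} [DecidableEq β] [AddCommMonoid α]
    (s : Finset β) (m : β → Multiset α) :
    (∑ i ∈ s, m i).sum = ∑ i ∈ s, (m i).sum := by
  induction s using Finset.induction with
  | empty => simp
  | @insert _ _ h ih => rw [Finset.sum_insert h, Finset.sum_insert h, Multiset.sum_add, ih]


theorem sFree_log_lower_bound (t n : ℕ) (ht : 2 ≤ t) (hn : t < n) :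
    Nat.log t (n - 1) ≤ sFree n t := by
  haveI : NeZero n := ⟨by omega⟩
  set k := Nat.log t (n - 1) with hk
  have hn1 : n - 1 ≠ 0 := by omega
  have htk : t ^ k ≤ n - 1 := Nat.pow_log_le_self t hn1
  have hpowlt : ∀ i ≤ k, t ^ i < n := by
    intro i hi
    calc t ^ i ≤ t ^ k := Nat.pow_le_pow_right (by omega) hi
    _ < n := by omega
  set φ : ℕ → ZMod n := fun i => ((t ^ i : ℕ) : ZMod n) with hφ
  have hinj : ∀ i ∈ Finset.range k, ∀ j ∈ Finset.range k, φ i = φ j → i = j := by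
    intro i hi j hj hij
    have h1 : (φ i).val = t ^ i := ZMod.val_cast_of_lt (hpowlt i (Finset.mem_range.mp hi).le)
    have h2 : (φ j).val = t ^ j := ZMod.val_cast_of_lt (hpowlt j (Finset.mem_range.mp hj).le)
    have : t ^ i = t ^ j := by rw [← h1, ← h2, hij]
    exact Nat.pow_right_injective ht this
  set S : Finset (ZMod n) := (Finset.range k).image φ with hS
  have hcard : S.card = k := by
    rw [hS, Finset.card_image_of_injOn, Finset.card_range]
    intro i hi j hj
    exact hinj i (Finset.mem_coe.mp hi) j (Finset.mem_coe.mp hj)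
  have hfree : IsTFreeSet t (↑S : Set (ZMod n)) := by
    intro A B hAS hBS hc hsum
    have hA' : ∀ x ∈ A, ∃ i ∈ Finset.range k, x = φ i := by
      intro x hx
      obtain ⟨i, hi, e⟩ := Finset.mem_image.mp (hAS x hx)
      exact ⟨i, hi, e.symm⟩
    have hB' : ∀ x ∈ B, ∃ i ∈ Finset.range k, x = φ i := by
      intro x hx
      obtain ⟨i, hi, e⟩ := Finset.mem_image.mp (hBS x hx)
      exact ⟨i, hi, e.symm⟩
    set f : ℕ → ℕ := fun i => A.count (φ i) with hf
    set g : ℕ → ℕ := fun i => B.count (φ i) with hg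
    have decompA := multiset_decomp k φ hinj A hA'
    have decompB := multiset_decomp k φ hinj B hB'
    have cardA : Multiset.card A = ∑ i ∈ Finset.range k, f i := by
      rw [decompA, card_finset_sum]
      simp [Multiset.card_replicate]
      rfl
    have cardB : Multiset.card B = ∑ i ∈ Finset.range k, g i := by
      rw [decompB, card_finset_sum]
      simp [Multiset.card_replicate]
      rfl
    have sumA : A.sum = ((∑ i ∈ Finset.range k, f i * t ^ i : ℕ) : ZMod n) := by
      rw [decompA, sum_finset_sum, Nat.cast_sum]
      apply Finset.sum_congr rfl
      intro i _
      rw [Multiset.sum_replicate, nsmul_eq_mul, Nat.cast_mul, hf]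
    have sumB : B.sum = ((∑ i ∈ Finset.range k, g i * t ^ i : ℕ) : ZMod n) := by
      rw [decompB, sum_finset_sum, Nat.cast_sum]
      apply Finset.sum_congr rfl
      intro i _
      rw [Multiset.sum_replicate, nsmul_eq_mul, Nat.cast_mul, hg]
    have hcount : (∑ i ∈ Finset.range k, f i) + (∑ i ∈ Finset.range k, g i) ≤ t := by
      rw [← cardA, ← cardB]; exact hc
    rcases Nat.eq_zero_or_pos k with hk0 | hkpos
    · rw [decompA, decompB, hk0]
      simp
    · -- bound the natural sums
      have hboundA : (∑ i ∈ Finset.range k, f i * t ^ i)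
          ≤ (∑ i ∈ Finset.range k, f i) * t ^ (k - 1) := by
        rw [Finset.sum_mul]
        apply Finset.sum_le_sum
        intro i hi
        exact Nat.mul_le_mul_left _ (Nat.pow_le_pow_right (by omega)
          (by have := Finset.mem_range.mp hi; omega))
      have hboundB : (∑ i ∈ Finset.range k, g i * t ^ i)
          ≤ (∑ i ∈ Finset.range k, g i) * t ^ (k - 1) := by
        rw [Finset.sum_mul]
        apply Finset.sum_le_sum
        intro i hi
        exact Nat.mul_le_mul_left _ (Nat.pow_le_pow_right (by omega)
          (by have := Finset.mem_range.mp hi; omega))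
      have htk' : t * t ^ (k - 1) = t ^ k := by
        rw [← pow_succ']
        congr 1
        omega
      have hltA : (∑ i ∈ Finset.range k, f i * t ^ i) < n := by
        calc (∑ i ∈ Finset.range k, f i * t ^ i)
            ≤ (∑ i ∈ Finset.range k, f i) * t ^ (k - 1) := hboundA
          _ ≤ t * t ^ (k - 1) := Nat.mul_le_mul_right _ (by omega)
          _ = t ^ k := htk'
          _ < n := by omega
      have hltB : (∑ i ∈ Finset.range k, g i * t ^ i) < n := by
        calc (∑ i ∈ Finset.range k, g i * t ^ i)
            ≤ (∑ i ∈ Finset.range k, g i) * t ^ (k - 1) := hboundB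
          _ ≤ t * t ^ (k - 1) := Nat.mul_le_mul_right _ (by omega)
          _ = t ^ k := htk'
          _ < n := by omega
      have hnat : (∑ i ∈ Finset.range k, f i * t ^ i) = ∑ i ∈ Finset.range k, g i * t ^ i := by
        have hcast : ((∑ i ∈ Finset.range k, f i * t ^ i : ℕ) : ZMod n)
            = ((∑ i ∈ Finset.range k, g i * t ^ i : ℕ) : ZMod n) := by
          rw [← sumA, ← sumB, hsum]
        have := congrArg ZMod.val hcast
        rwa [ZMod.val_cast_of_lt hltA, ZMod.val_cast_of_lt hltB] at this
      have key := pow_rep_unique t ht k f g hcount hnat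
      rw [decompA, decompB]
      apply Finset.sum_congr rfl
      intro i hi
      have hkey := key i (Finset.mem_range.mp hi)
      simp only [hf, hg] at hkey
      rw [hkey]
  have hbdd : BddAbove {m | ∃ S : Finset (ZMod n), IsTFreeSet t (↑S : Set (ZMod n)) ∧ S.card = m} := by
    refine ⟨n, ?_⟩
    rintro m ⟨T, _, rfl⟩
    have := Finset.card_le_univ T
    rwa [ZMod.card] at this
  exact le_csSup hbdd ⟨S, hfree, hcard⟩
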